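/- Let A be a unital C*-algebra, L ∈ A, and define ℒ(X) = (1/2)·L*·(X·L − L·X) + (1/2)·(L*·X − X·L*)·L and 𝒢(X) = −i·[X, H₁ + H₂] + ℒ(X). Let H₁, H₂, V, W ∈ A be self-adjoint with V ≥ 0 and H₂ ≥ 0, let z, w : Fin m → A, and let θ ≥ 0, γ > 0, β ≥ 0, λ̃ ∈ ℝ. Assume: (a) [V − θH₁, H₂] = Σᵢ [V − θH₁, zᵢ*]·wᵢ − Σᵢ wᵢ*·[zᵢ, V − θH₁]; (b) ℒ(H₂) ≤ Σᵢ ℒ(zᵢ*)·wᵢ + Σᵢ wᵢ*·ℒ(zᵢ) + β·Σᵢ [zᵢ,L]*·[zᵢ,L]; (c) Σᵢ (wᵢ − zᵢ/γ)*·(wᵢ − zᵢ/γ) ≤ (1/γ²)·Σᵢ zᵢ*·zᵢ; and (d) −i[V,H₁] + ℒ(V) + (1/γ)·Σᵢ (i[zᵢ, V − θH₁] + θℒ(zᵢ) + zᵢ)*·(i[zᵢ, V − θH₁] + θℒ(zᵢ) + zᵢ) + θβ·Σᵢ [zᵢ,L]*·[zᵢ,L] + W ≤ λ̃·1. Then 𝒢(V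 + θH₂) + W ≤ λ̃·1. -/

import Mathlib

/-- Algebraic core of Theorem 1 of the paper (the Popov-type stability
result): under the commutator decomposition (a),(b) defining the uncertainty
set 𝒲₁, the sector bound (c), and the Popov-type dissipation inequality (d),
the quantum dissipation inequality `𝒢(V + θH₂) + W ≤ λ̃·1` holds. -/
theorem popov_dissipation_inequality {A : Type*} [CStarAlgebra A]
    [PartialOrder A] [StarOrderedRing A] {m : ℕ}
    (L H₁ H₂ V W : A)
    (hH₁ : IsSelfAdjoint H₁) (hH₂ : IsSelfAdjoint H₂)
    (hV : IsSelfAdjoint V) (hW : IsSelfAdjoint W)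
    (hVnonneg : (0 : A) ≤ V) (hH₂nonneg : (0 : A) ≤ H₂)
    (z w : Fin m → A) (θ γ β lam : ℝ)
    (hθ : 0 ≤ θ) (hγ : 0 < γ) (hβ : 0 ≤ β)
    (ℒ : A → A)
    (hℒ : ∀ X : A, ℒ X = (1 / 2 : ℂ) • (star L * (X * L - L * X)) +
        (1 / 2 : ℂ) • ((star L * X - X * star L) * L))
    (𝒢 : A → A)
    (h𝒢 : ∀ X : A, 𝒢 X = (-Complex.I) • (X * (H₁ + H₂) - (H₁ + H₂) * X) + ℒ X)
    -- (a) commutator decomposition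
    (ha : (V - (θ : ℂ) • H₁) * H₂ - H₂ * (V - (θ : ℂ) • H₁)
        = ∑ i, ((V - (θ : ℂ) • H₁) * star (z i) - star (z i) * (V - (θ : ℂ) • H₁)) * w i
          - ∑ i, star (w i) * (z i * (V - (θ : ℂ) • H₁) - (V - (θ : ℂ) • H₁) * z i))
    -- (b) bound on ℒ(H₂)
    (hb : ℒ H₂ ≤ ∑ i, ℒ (star (z i)) * w i + ∑ i, star (w i) * ℒ (z i)
          + (β : ℂ) • ∑ i, star (z i * L - L * z i) * (z i * L - L * z i))
    -- (c) sector bound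
    (hc : ∑ i, star (w i - ((1 / γ : ℝ) : ℂ) • z i) * (w i - ((1 / γ : ℝ) : ℂ) • z i)
          ≤ ((1 / γ ^ 2 : ℝ) : ℂ) • ∑ i, star (z i) * z i)
    -- (d) Popov-type dissipation inequality
    (hd : (-Complex.I) • (V * H₁ - H₁ * V) + ℒ V
          + ((1 / γ : ℝ) : ℂ) • ∑ i,
              star (Complex.I • (z i * (V - (θ : ℂ) • H₁) - (V - (θ : ℂ) • H₁) * z i)
                      + (θ : ℂ) • ℒ (z i) + z i)
                * (Complex.I • (z i * (V - (θ : ℂ) • H₁) - (V - (θ : ℂ) • H₁) * z i)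
                      + (θ : ℂ) • ℒ (z i) + z i)
          + ((θ * β : ℝ) : ℂ) • ∑ i, star (z i * L - L * z i) * (z i * L - L * z i)
          + W ≤ (lam : ℂ) • (1 : A)) :
    𝒢 (V + (θ : ℂ) • H₂) + W ≤ (lam : ℂ) • (1 : A) := by
  have hγc : (γ:ℂ) ≠ 0 := Complex.ofReal_ne_zero.mpr hγ.ne'
  -- scalar monotonicity helper
  have hsmul : ∀ (t : ℝ), 0 ≤ t → ∀ {x y : A}, x ≤ y → (t:ℂ) • x ≤ (t:ℂ) • y := by
    intro t ht x y h
    rw [Complex.coe_smul, Complex.coe_smul]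
    exact smul_le_smul_of_nonneg_left h ht
  -- ℒ commutes with star
  have hLstar : ∀ X : A, ℒ (star X) = star (ℒ X) := by
    intro X
    rw [hℒ, hℒ]
    simp only [star_add, star_smul, star_mul, star_sub, star_star, Complex.star_def, map_div₀,
      map_one, map_ofNat, mul_sub, sub_mul, mul_assoc]
    module
  set P : A := V - (θ : ℂ) • H₁ with hPdef
  have hPsa : star P = P := by
    simp only [hPdef, star_sub, star_smul, hV.star_eq, hH₁.star_eq, Complex.star_def,
      Complex.conj_ofReal]
  set AA : Fin m → A := fun i => Complex.I • (z i * P - P * z i) + (θ : ℂ) • ℒ (z i) + z i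
    with hAA
  -- completion of squares
  have key : ∀ x y : A,
      star x * y + star y * x ≤ ((1/γ:ℝ):ℂ) • (star x * x) + ((γ:ℝ):ℂ) • (star y * y) := by
    intro x y
    have h0 : (0:A) ≤ ((1/γ:ℝ):ℂ) • (star (((γ:ℝ):ℂ) • y - x) * (((γ:ℝ):ℂ) • y - x)) := by
      rw [Complex.coe_smul]
      exact smul_nonneg (by positivity) (star_mul_self_nonneg _)
    have heq : ((1/γ:ℝ):ℂ) • (star (((γ:ℝ):ℂ) • y - x) * (((γ:ℝ):ℂ) • y - x))
        = ((1/γ:ℝ):ℂ) • (star x * x) + ((γ:ℝ):ℂ) • (star y * y)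
          - (star x * y + star y * x) := by
      simp only [star_sub, star_smul, Complex.star_def, Complex.conj_ofReal, sub_mul, mul_sub,
        smul_mul_assoc, mul_smul_comm, smul_sub, smul_add, smul_smul]
      match_scalars <;> push_cast <;> field_simp
    rw [heq] at h0
    exact sub_nonneg.mp h0
  -- summed completion of squares
  have ineq3 : ∑ i, (star (AA i) * w i + star (w i) * AA i)
      ≤ ((1/γ:ℝ):ℂ) • ∑ i, star (AA i) * AA i + ((γ:ℝ):ℂ) • ∑ i, star (w i) * w i := by
    rw [Finset.smul_sum, Finset.smul_sum, ← Finset.sum_add_distrib]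
    exact Finset.sum_le_sum fun i _ => key (AA i) (w i)
  -- sector bound consequence
  have ineq4 : ((γ:ℝ):ℂ) • ∑ i, star (w i) * w i
        - ∑ i, (star (z i) * w i + star (w i) * z i) ≤ 0 := by
    have hexp : ∀ i : Fin m,
        star (w i - ((1 / γ : ℝ) : ℂ) • z i) * (w i - ((1 / γ : ℝ) : ℂ) • z i)
          = star (w i) * w i - ((1/γ:ℝ):ℂ) • (star (z i) * w i + star (w i) * z i)
            + ((1 / γ ^ 2 : ℝ) : ℂ) • (star (z i) * z i) := by
      intro i
      simp only [star_sub, star_smul, Complex.star_def, Complex.conj_ofReal, sub_mul, mul_sub,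
        smul_mul_assoc, mul_smul_comm, smul_sub, smul_add, smul_smul]
      match_scalars <;> push_cast <;> field_simp <;> ring
    rw [Finset.sum_congr rfl fun i _ => hexp i] at hc
    rw [Finset.sum_add_distrib, Finset.sum_sub_distrib, ← Finset.smul_sum, ← Finset.smul_sum]
      at hc
    have hc2 : ∑ i, star (w i) * w i
        - ((1/γ:ℝ):ℂ) • ∑ i, (star (z i) * w i + star (w i) * z i) ≤ 0 := by
      have h := sub_le_sub_right hc (((1 / γ ^ 2 : ℝ) : ℂ) • ∑ i, star (z i) * z i)
      simpa only [add_sub_cancel_right, sub_self] using h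
    have := hsmul γ hγ.le hc2
    rw [smul_zero] at this
    calc ((γ:ℝ):ℂ) • ∑ i, star (w i) * w i - ∑ i, (star (z i) * w i + star (w i) * z i)
        = ((γ:ℝ):ℂ) • (∑ i, star (w i) * w i
            - ((1/γ:ℝ):ℂ) • ∑ i, (star (z i) * w i + star (w i) * z i)) := by
          rw [smul_sub, smul_smul]
          match_scalars <;> push_cast <;> field_simp
      _ ≤ 0 := this
  -- star of the key combination
  have hstarAA : ∀ i : Fin m, star (AA i)
      = (-Complex.I) • (P * star (z i) - star (z i) * P) + (θ : ℂ) • ℒ (star (z i))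
        + star (z i) := by
    intro i
    simp only [hAA, star_add, star_smul, star_sub, star_mul, hPsa, Complex.star_def,
      Complex.conj_I, Complex.conj_ofReal, ← hLstar]
  have hsplit : ∀ i : Fin m, star (AA i) * w i + star (w i) * AA i
      = ((-Complex.I) • ((P * star (z i) - star (z i) * P) * w i)
          + Complex.I • (star (w i) * (z i * P - P * z i)))
        + ((θ : ℂ) • (ℒ (star (z i)) * w i) + (θ : ℂ) • (star (w i) * ℒ (z i)))
        + (star (z i) * w i + star (w i) * z i) := by
    intro i
    rw [hstarAA i, hAA]
    simp only [add_mul, sub_mul, mul_add, mul_sub, smul_mul_assoc, mul_smul_comm, smul_add,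
      smul_sub]
    module
  -- main chain
  calc 𝒢 (V + (θ : ℂ) • H₂) + W
      = (-Complex.I) • (V * H₁ - H₁ * V) + ℒ V + W
        + (-Complex.I) • (P * H₂ - H₂ * P) + (θ:ℂ) • ℒ H₂ := by
        rw [h𝒢, hℒ (V + (θ:ℂ) • H₂), hℒ V, hℒ H₂, hPdef]
        simp only [mul_add, add_mul, mul_sub, sub_mul, smul_add, smul_sub, smul_smul,
          smul_mul_assoc, mul_smul_comm, mul_assoc]
        module
    _ ≤ (-Complex.I) • (V * H₁ - H₁ * V) + ℒ V + W
        + (-Complex.I) • (P * H₂ - H₂ * P)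
        + (θ:ℂ) • (∑ i, ℒ (star (z i)) * w i + ∑ i, star (w i) * ℒ (z i)
            + (β : ℂ) • ∑ i, star (z i * L - L * z i) * (z i * L - L * z i)) :=
        add_le_add_right (hsmul θ hθ hb) _
    _ = (-Complex.I) • (V * H₁ - H₁ * V) + ℒ V + W
        + ((θ * β : ℝ) : ℂ) • ∑ i, star (z i * L - L * z i) * (z i * L - L * z i)
        + (∑ i, (star (AA i) * w i + star (w i) * AA i)
            - ∑ i, (star (z i) * w i + star (w i) * z i)) := by
        rw [ha, Finset.sum_congr rfl fun i _ => hsplit i]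
        simp only [Finset.sum_add_distrib, Finset.sum_sub_distrib, smul_add, smul_sub,
          smul_smul, ← Finset.smul_sum]
        match_scalars <;> push_cast <;> ring
    _ ≤ (-Complex.I) • (V * H₁ - H₁ * V) + ℒ V + W
        + ((θ * β : ℝ) : ℂ) • ∑ i, star (z i * L - L * z i) * (z i * L - L * z i)
        + (((1/γ:ℝ):ℂ) • ∑ i, star (AA i) * AA i
            + (((γ:ℝ):ℂ) • ∑ i, star (w i) * w i
                - ∑ i, (star (z i) * w i + star (w i) * z i))) := by
        refine add_le_add_right ?_ _
        calc ∑ i, (star (AA i) * w i + star (w i) * AA i)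
              - ∑ i, (star (z i) * w i + star (w i) * z i)
            ≤ (((1/γ:ℝ):ℂ) • ∑ i, star (AA i) * AA i + ((γ:ℝ):ℂ) • ∑ i, star (w i) * w i)
              - ∑ i, (star (z i) * w i + star (w i) * z i) := sub_le_sub_right ineq3 _
          _ = ((1/γ:ℝ):ℂ) • ∑ i, star (AA i) * AA i
              + (((γ:ℝ):ℂ) • ∑ i, star (w i) * w i
                  - ∑ i, (star (z i) * w i + star (w i) * z i)) := by abel
    _ ≤ (-Complex.I) • (V * H₁ - H₁ * V) + ℒ V + W
        + ((θ * β : ℝ) : ℂ) • ∑ i, star (z i * L - L * z i) * (z i * L - L * z i)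
        + (((1/γ:ℝ):ℂ) • ∑ i, star (AA i) * AA i + 0) := by
        exact add_le_add_right (add_le_add_right ineq4 _) _
    _ = (-Complex.I) • (V * H₁ - H₁ * V) + ℒ V
        + ((1 / γ : ℝ) : ℂ) • ∑ i, star (AA i) * AA i
        + ((θ * β : ℝ) : ℂ) • ∑ i, star (z i * L - L * z i) * (z i * L - L * z i)
        + W := by abel
    _ ≤ (lam : ℂ) • (1 : A) := by simpa only [hAA] using hd
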